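/- Let n, s ≥ 1, let C ∈ ℂ^{n×n} be idempotent (C·C = C), and let d_i, z_i ∈ ℂ^n for i = 1,…,s be such that Σ_{i=1}^s z_i(k)·d_i(k) = 1 for every k. Set D_i = diag(d_i) and Z_i = diag(z_i). Then for every j ∈ {1,…,s}: C·D_j − Σ_{i=1}^s C·D_j·Z_i·C·D_i = − Σ_{i≠j} C·Z_i·(D_j·C·D_i − D_i·C·D_j). -/

import Mathlib

open Matrix

/-- **Key algebraic identity in the rank analysis of the AZ residual matrix**
(from the proof of Theorem `theo:rank` of the paper). If `C` is idempotent, `D_i = diag(d_i)`,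
`Z_i = diag(z_i)` and `∑_i z_i(k) d_i(k) = 1` for every `k` (i.e. `∑_i Z_i D_i = I`), then for
every `j`:
`C D_j - ∑_i C D_j Z_i C D_i = -∑_{i ≠ j} C Z_i (D_j C D_i - D_i C D_j)`. -/
theorem az_rank_key_identity (n s : ℕ) (hn : 1 ≤ n) (hs : 1 ≤ s)
    (C : Matrix (Fin n) (Fin n) ℂ) (hC : C * C = C)
    (d z : Fin s → Fin n → ℂ)
    (hzd : ∀ k, ∑ i, z i k * d i k = 1) :
    ∀ j : Fin s,
      C * Matrix.diagonal (d j) -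
          ∑ i, C * Matrix.diagonal (d j) * Matrix.diagonal (z i) * C * Matrix.diagonal (d i) =
        -∑ i ∈ Finset.univ.erase j,
          C * Matrix.diagonal (z i) *
            (Matrix.diagonal (d j) * C * Matrix.diagonal (d i) -
              Matrix.diagonal (d i) * C * Matrix.diagonal (d j)) := by
  intro j
  set D : Fin s → Matrix (Fin n) (Fin n) ℂ := fun i => Matrix.diagonal (d i) with hD
  set Z : Fin s → Matrix (Fin n) (Fin n) ℂ := fun i => Matrix.diagonal (z i) with hZ
  have hcomm : ∀ i, D j * Z i = Z i * D j := fun i => by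
    simp [hD, hZ, Matrix.diagonal_mul_diagonal, mul_comm]
  have hsum : ∑ i, Z i * D i = (1 : Matrix (Fin n) (Fin n) ℂ) := by
    ext k l
    simp only [hZ, hD, Matrix.diagonal_mul_diagonal, Matrix.sum_apply,
      Matrix.diagonal_apply, Matrix.one_apply]
    by_cases h : k = l
    · simp [h, hzd l]
    · simp [h]
  have expand : ∀ i, C * Z i * (D j * C * D i - D i * C * D j)
      = C * D j * Z i * C * D i - C * Z i * D i * C * D j := by
    intro i
    rw [mul_sub]
    congr 1
    rw [show C * Z i * (D j * C * D i) = C * (Z i * D j) * C * D i by noncomm_ring,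
      ← hcomm]
    · noncomm_ring
    · noncomm_ring
  have h1 : ∑ i, C * Z i * D i * C * D j = C * D j := by
    have e : ∑ i, C * Z i * D i * C * D j = C * ((∑ i, Z i * D i) * (C * D j)) := by
      rw [Finset.sum_mul, Finset.mul_sum]
      exact Finset.sum_congr rfl fun i _ => by noncomm_ring
    rw [e, hsum, one_mul, ← mul_assoc, hC]
  have hj0 : C * D j * Z j * C * D j - C * Z j * D j * C * D j = 0 := by
    rw [show C * D j * Z j = C * (D j * Z j) by rw [mul_assoc], hcomm, ← mul_assoc, sub_self]
  change C * D j - ∑ i, C * D j * Z i * C * D i =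
    -∑ i ∈ Finset.univ.erase j, C * Z i * (D j * C * D i - D i * C * D j)
  simp only [expand]
  have herase : ∑ x ∈ Finset.univ.erase j,
      (C * D j * Z x * C * D x - C * Z x * D x * C * D j) =
      ∑ x, (C * D j * Z x * C * D x - C * Z x * D x * C * D j) :=
    Finset.sum_erase _ hj0
  rw [herase, Finset.sum_sub_distrib, h1, neg_sub]
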